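/- Let D₁, D₂ > 0, r₁, r₂ > 0, ĥ₁, ĥ₂, ĝ₂ > 0, n > 0 and L₀ > 0. Suppose U₁, U₂ : [0, L₀] → ℝ are twice continuously differentiable, with Uᵢ(0) = Uᵢ(L₀) = 0, Uᵢ(ξ) > 0 for ξ ∈ (0, L₀), D₁ U₁''(ξ) + U₁(ξ)(r₁ − (ĥ₁ U₁(ξ))ⁿ) = 0 and D₂ U₂''(ξ) + U₂(ξ)(r₂ − (ĥ₂ U₂(ξ))ⁿ) = 0 for all ξ ∈ (0, L₀). If r₂/r₁ ≤ D₂/D₁ and (r₂/r₁)^{1/n} ĥ₁ ≤ ĝ₂, then ĝ₂ U₁(ξ) ≥ ĥ₂ U₂(ξ) for all ξ ∈ [0, L₀]. -/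

import Mathlib

open Set Real
open Filter Topology

private lemma nonneg_of_bc (L : ℝ) (U : ℝ → ℝ) (hb0 : U 0 = 0) (hbL : U L = 0)
    (hpos : ∀ ξ ∈ Ioo 0 L, 0 < U ξ) : ∀ ξ ∈ Icc 0 L, 0 ≤ U ξ := by
  intro ξ hξ
  rcases eq_or_lt_of_le hξ.1 with h | h
  · rw [← h, hb0]
  rcases eq_or_lt_of_le hξ.2 with h' | h'
  · rw [h', hbL]
  exact (hpos ξ ⟨h, h'⟩).le

private lemma maxBound (D r h n L : ℝ) (hD : 0 < D) (hr : 0 < r) (hh : 0 < h)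
    (hn : 0 < n) (hL : 0 < L) (U : ℝ → ℝ)
    (hreg : ContDiffOn ℝ 2 U (Icc 0 L))
    (hb0 : U 0 = 0) (hbL : U L = 0)
    (hpos : ∀ ξ ∈ Ioo 0 L, 0 < U ξ)
    (hode : ∀ ξ ∈ Ioo 0 L, D * deriv (deriv U) ξ + U ξ * (r - (h * U ξ) ^ n) = 0) :
    ∀ ξ ∈ Icc 0 L, (h * U ξ) ^ n ≤ r := by
  have hcont : ContinuousOn U (Icc 0 L) := hreg.continuousOn
  obtain ⟨x, hxI, hxmax⟩ := isCompact_Icc.exists_isMaxOn (nonempty_Icc.2 hL.le) hcont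
  have hmax : ∀ t ∈ Icc 0 L, U t ≤ U x := hxmax
  have hhalf : L / 2 ∈ Ioo 0 L := ⟨by linarith, by linarith⟩
  have hMpos : 0 < U x := lt_of_lt_of_le (hpos _ hhalf) (hmax _ (Ioo_subset_Icc_self hhalf))
  have hxIoo : x ∈ Ioo 0 L := by
    rcases eq_or_lt_of_le hxI.1 with h0 | h0
    · exfalso; rw [← h0, hb0] at hMpos; exact lt_irrefl 0 hMpos
    rcases eq_or_lt_of_le hxI.2 with h1 | h1
    · exfalso; rw [h1, hbL] at hMpos; exact lt_irrefl 0 hMpos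
    exact ⟨h0, h1⟩
  have hC1 : ContDiffOn ℝ 1 (deriv U) (Ioo 0 L) :=
    (hreg.mono Ioo_subset_Icc_self).deriv_of_isOpen isOpen_Ioo (by norm_num)
  have hdd : deriv (deriv U) x ≤ 0 := by
    by_contra hq
    push_neg at hq
    have hdiff : HasDerivAt (deriv U) (deriv (deriv U) x) x :=
      ((hC1.differentiableOn one_ne_zero x hxIoo).differentiableAt
        (isOpen_Ioo.mem_nhds hxIoo)).hasDerivAt
    have hloc : IsLocalMax U x := hxmax.isLocalMax (Icc_mem_nhds hxIoo.1 hxIoo.2)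
    have hd0 : deriv U x = 0 := hloc.deriv_eq_zero
    -- slopes of deriv U tend to a positive number; get deriv U > 0 on a right interval
    have hslope : Tendsto (slope (deriv U) x) (𝓝[≠] x) (𝓝 (deriv (deriv U) x)) :=
      hasDerivAt_iff_tendsto_slope.mp hdiff
    have hslope' : Tendsto (slope (deriv U) x) (𝓝[>] x) (𝓝 (deriv (deriv U) x)) :=
      hslope.mono_left (nhdsWithin_mono x fun t ht => ne_of_gt ht)
    have hev : ∀ᶠ t in 𝓝[>] x, 0 < deriv U t := by
      filter_upwards [hslope'.eventually (eventually_gt_nhds hq), self_mem_nhdsWithin]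
        with t ht ht'
      rw [slope_def_field] at ht
      rw [hd0, sub_zero] at ht
      have htx : 0 < t - x := sub_pos.mpr ht'
      have := mul_pos ht htx
      rw [div_mul_cancel₀ _ htx.ne'] at this
      exact this
    obtain ⟨u, hu, husub⟩ := mem_nhdsGT_iff_exists_Ioo_subset.mp hev
    set z : ℝ := min ((x + u) / 2) ((x + L) / 2) with hz
    have hxz : x < z := by
      simp only [hz, lt_min_iff]
      constructor
      · simp only [mem_Ioi] at hu; linarith
      · linarith [hxIoo.2]
    have hzu : z < u := by
      simp only [mem_Ioi] at hu
      calc z ≤ (x + u) / 2 := min_le_left _ _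
        _ < u := by linarith
    have hzL : z < L := by
      calc z ≤ (x + L) / 2 := min_le_right _ _
        _ < L := by linarith [hxIoo.2]
    have hmono : StrictMonoOn U (Icc x z) := by
      apply strictMonoOn_of_deriv_pos (convex_Icc x z)
      · exact hcont.mono (Icc_subset_Icc hxI.1 hzL.le)
      · intro t ht
        rw [interior_Icc] at ht
        exact husub ⟨ht.1, ht.2.trans hzu⟩
    have : U x < U z := hmono (left_mem_Icc.mpr hxz.le) (right_mem_Icc.mpr hxz.le) hxz
    have hzI : z ∈ Icc 0 L := ⟨le_trans hxI.1 hxz.le, hzL.le⟩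
    linarith [hmax z hzI]
  -- from the ODE at x, (h * U x) ^ n ≤ r
  have hMb : (h * U x) ^ n ≤ r := by
    have h1 := hode x hxIoo
    nlinarith [mul_nonpos_of_nonneg_of_nonpos hD.le hdd]
  intro t htI
  have h0 : 0 ≤ U t := nonneg_of_bc L U hb0 hbL hpos t htI
  calc (h * U t) ^ n ≤ (h * U x) ^ n := by
        apply Real.rpow_le_rpow (by positivity) _ hn.le
        exact mul_le_mul_of_nonneg_left (hmax t htI) hh.le
    _ ≤ r := hMb

/-- Corollary 1, case c = 0, non-invasibility: `U₁`, `U₂` positive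
Dirichlet stationary states of `Dᵢ Uᵢ'' + Uᵢ(rᵢ − (ĥᵢUᵢ)ⁿ) = 0` on `[0, L₀]`. If
`r₂/r₁ ≤ D₂/D₁` and `(r₂/r₁)^{1/n} ĥ₁ ≤ ĝ₂`, then `ĝ₂ U₁ ≥ ĥ₂ U₂` on `[0, L₀]`. -/
theorem stmt12 (D₁ D₂ r₁ r₂ hhat₁ hhat₂ ghat₂ n L₀ : ℝ)
    (hD₁ : 0 < D₁) (hD₂ : 0 < D₂) (hr₁ : 0 < r₁) (hr₂ : 0 < r₂)
    (hh₁ : 0 < hhat₁) (hh₂ : 0 < hhat₂) (hg₂ : 0 < ghat₂) (hn : 0 < n) (hL₀ : 0 < L₀)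
    (U₁ U₂ : ℝ → ℝ)
    (hreg₁ : ContDiffOn ℝ 2 U₁ (Icc 0 L₀)) (hreg₂ : ContDiffOn ℝ 2 U₂ (Icc 0 L₀))
    (hbc₁ : U₁ 0 = 0 ∧ U₁ L₀ = 0) (hbc₂ : U₂ 0 = 0 ∧ U₂ L₀ = 0)
    (hpos₁ : ∀ ξ ∈ Ioo 0 L₀, 0 < U₁ ξ) (hpos₂ : ∀ ξ ∈ Ioo 0 L₀, 0 < U₂ ξ)
    (hode₁ : ∀ ξ ∈ Ioo 0 L₀,
      D₁ * deriv (deriv U₁) ξ + U₁ ξ * (r₁ - (hhat₁ * U₁ ξ) ^ n) = 0)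
    (hode₂ : ∀ ξ ∈ Ioo 0 L₀,
      D₂ * deriv (deriv U₂) ξ + U₂ ξ * (r₂ - (hhat₂ * U₂ ξ) ^ n) = 0)
    (hrD : r₂ / r₁ ≤ D₂ / D₁)
    (hgh : (r₂ / r₁) ^ (1 / n) * hhat₁ ≤ ghat₂) :
    ∀ ξ ∈ Icc 0 L₀, hhat₂ * U₂ ξ ≤ ghat₂ * U₁ ξ := by
  obtain ⟨hb10, hb1L⟩ := hbc₁
  obtain ⟨hb20, hb2L⟩ := hbc₂
  have hU₁0 : ∀ ξ ∈ Icc 0 L₀, 0 ≤ U₁ ξ := nonneg_of_bc L₀ U₁ hb10 hb1L hpos₁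
  have hU₂0 : ∀ ξ ∈ Icc 0 L₀, 0 ≤ U₂ ξ := nonneg_of_bc L₀ U₂ hb20 hb2L hpos₂
  set c : ℝ := (r₂ / r₁) ^ (1 / n) with hcdef
  have hc0 : 0 < c := Real.rpow_pos_of_pos (div_pos hr₂ hr₁) _
  set A : ℝ := c * hhat₁ with hAdef
  have hA : 0 < A := mul_pos hc0 hh₁
  have hcpow : c ^ n = r₂ / r₁ := by
    rw [hcdef, ← Real.rpow_mul (div_pos hr₂ hr₁).le, one_div_mul_cancel hn.ne',
      Real.rpow_one]
  have hMax₁ : ∀ ξ ∈ Icc 0 L₀, (hhat₁ * U₁ ξ) ^ n ≤ r₁ :=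
    maxBound D₁ r₁ hhat₁ n L₀ hD₁ hr₁ hh₁ hn hL₀ U₁ hreg₁ hb10 hb1L hpos₁ hode₁
  set φ : ℝ → ℝ := fun t => hhat₂ * U₂ t - A * U₁ t with hφdef
  have hφcont : ContinuousOn φ (Icc 0 L₀) :=
    (continuousOn_const.mul hreg₂.continuousOn).sub
      (continuousOn_const.mul hreg₁.continuousOn)
  suffices key : ∀ ξ ∈ Icc 0 L₀, φ ξ ≤ 0 by
    intro ξ hξ
    have h1 := key ξ hξ
    have h2 : A * U₁ ξ ≤ ghat₂ * U₁ ξ := mul_le_mul_of_nonneg_right hgh (hU₁0 ξ hξ)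
    simp only [hφdef] at h1
    linarith
  by_contra hcon
  push_neg at hcon
  obtain ⟨ξ₀, hξ₀I, hξ₀⟩ := hcon
  have hφ0 : φ 0 = 0 := by simp [hφdef, hb10, hb20]
  have hφL : φ L₀ = 0 := by simp [hφdef, hb1L, hb2L]
  have hξ₀0 : 0 < ξ₀ := by
    rcases eq_or_lt_of_le hξ₀I.1 with h | h
    · exfalso; rw [← h, hφ0] at hξ₀; exact lt_irrefl 0 hξ₀
    · exact h
  have hξ₀L : ξ₀ < L₀ := by
    rcases eq_or_lt_of_le hξ₀I.2 with h | h
    · exfalso; rw [h, hφL] at hξ₀; exact lt_irrefl 0 hξ₀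
    · exact h
  -- the crossing points a < ξ₀ < b
  set Sa : Set ℝ := {t | t ∈ Icc 0 ξ₀ ∧ φ t ≤ 0} with hSadef
  have hSane : Sa.Nonempty := ⟨0, ⟨le_refl 0, hξ₀0.le⟩, le_of_eq hφ0⟩
  have hSabdd : BddAbove Sa := ⟨ξ₀, fun t ht => ht.1.2⟩
  have hSaclosed : IsClosed Sa := by
    have h1 : IsClosed (Icc 0 ξ₀ ∩ φ ⁻¹' (Iic 0)) :=
      (hφcont.mono (Icc_subset_Icc le_rfl hξ₀I.2)).preimage_isClosed_of_isClosed
        isClosed_Icc isClosed_Iic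
    convert h1 using 1
    rfl
  set a : ℝ := sSup Sa with hadef
  have haSa : a ∈ Sa := hSaclosed.csSup_mem hSane hSabdd
  have ha0 : 0 ≤ a := haSa.1.1
  have haξ₀ : a < ξ₀ := by
    rcases eq_or_lt_of_le haSa.1.2 with h | h
    · exfalso; rw [h] at haSa; linarith [haSa.2]
    · exact h
  have haI : a ∈ Icc 0 L₀ := ⟨ha0, le_trans haSa.1.2 hξ₀I.2⟩
  have hφposR : ∀ t ∈ Ioc a ξ₀, 0 < φ t := by
    intro t ht
    by_contra hle
    push_neg at hle
    have htSa : t ∈ Sa := ⟨⟨le_trans ha0 ht.1.le, ht.2⟩, hle⟩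
    exact absurd (le_csSup hSabdd htSa) (not_le.2 ht.1)
  have hφa0 : φ a = 0 := by
    refine le_antisymm haSa.2 ?_
    have hsub : Ioc a ξ₀ ⊆ Icc 0 L₀ := fun t ht =>
      ⟨le_trans ha0 ht.1.le, le_trans ht.2 hξ₀I.2⟩
    have hne : (𝓝[Ioc a ξ₀] a).NeBot := by
      rw [← mem_closure_iff_nhdsWithin_neBot, closure_Ioc haξ₀.ne]
      exact ⟨le_refl a, haξ₀.le⟩
    have htend : Tendsto φ (𝓝[Ioc a ξ₀] a) (𝓝 (φ a)) :=
      ((hφcont a haI).mono hsub).tendsto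
    exact ge_of_tendsto htend
      (eventually_mem_nhdsWithin.mono fun t ht => (hφposR t ht).le)
  set Sb : Set ℝ := {t | t ∈ Icc ξ₀ L₀ ∧ φ t ≤ 0} with hSbdef
  have hSbne : Sb.Nonempty := ⟨L₀, ⟨hξ₀I.2, le_refl L₀⟩, le_of_eq hφL⟩
  have hSbbdd : BddBelow Sb := ⟨ξ₀, fun t ht => ht.1.1⟩
  have hSbclosed : IsClosed Sb := by
    have h1 : IsClosed (Icc ξ₀ L₀ ∩ φ ⁻¹' (Iic 0)) :=
      (hφcont.mono (Icc_subset_Icc hξ₀I.1 le_rfl)).preimage_isClosed_of_isClosed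
        isClosed_Icc isClosed_Iic
    convert h1 using 1
    rfl
  set b : ℝ := sInf Sb with hbdef
  have hbSb : b ∈ Sb := hSbclosed.csInf_mem hSbne hSbbdd
  have hbL : b ≤ L₀ := hbSb.1.2
  have hξ₀b : ξ₀ < b := by
    rcases eq_or_lt_of_le hbSb.1.1 with h | h
    · exfalso; rw [← h] at hbSb; linarith [hbSb.2]
    · exact h
  have hbI : b ∈ Icc 0 L₀ := ⟨le_trans hξ₀I.1 hbSb.1.1, hbL⟩
  have hφposL : ∀ t ∈ Ico ξ₀ b, 0 < φ t := by
    intro t ht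
    by_contra hle
    push_neg at hle
    have htSb : t ∈ Sb := ⟨⟨ht.1, le_trans ht.2.le hbL⟩, hle⟩
    exact absurd (csInf_le hSbbdd htSb) (not_le.2 ht.2)
  have hφb0 : φ b = 0 := by
    refine le_antisymm hbSb.2 ?_
    have hsub : Ico ξ₀ b ⊆ Icc 0 L₀ := fun t ht =>
      ⟨le_trans hξ₀I.1 ht.1, le_trans ht.2.le hbL⟩
    have hne : (𝓝[Ico ξ₀ b] b).NeBot := by
      rw [← mem_closure_iff_nhdsWithin_neBot, closure_Ico hξ₀b.ne]
      exact ⟨hξ₀b.le, le_refl b⟩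
    have htend : Tendsto φ (𝓝[Ico ξ₀ b] b) (𝓝 (φ b)) :=
      ((hφcont b hbI).mono hsub).tendsto
    exact ge_of_tendsto htend
      (eventually_mem_nhdsWithin.mono fun t ht => (hφposL t ht).le)
  have hab : a < b := haξ₀.trans hξ₀b
  have hIooab : Ioo a b ⊆ Ioo 0 L₀ := fun t ht =>
    ⟨lt_of_le_of_lt ha0 ht.1, lt_of_lt_of_le ht.2 hbL⟩
  have hIccab : Icc a b ⊆ Icc 0 L₀ := fun t ht =>
    ⟨le_trans ha0 ht.1, le_trans ht.2 hbL⟩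
  have hφposab : ∀ t ∈ Ioo a b, 0 < φ t := by
    intro t ht
    rcases le_or_gt t ξ₀ with h | h
    · exact hφposR t ⟨ht.1, h⟩
    · exact hφposL t ⟨h.le, ht.2⟩
  -- derivatives
  have hUD : UniqueDiffOn ℝ (Icc (0:ℝ) L₀) := uniqueDiffOn_Icc hL₀
  set d₁ : ℝ → ℝ := derivWithin U₁ (Icc 0 L₀) with hd₁def
  set d₂ : ℝ → ℝ := derivWithin U₂ (Icc 0 L₀) with hd₂def
  have hd₁cont : ContinuousOn d₁ (Icc 0 L₀) :=
    hreg₁.continuousOn_derivWithin hUD one_le_two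
  have hd₂cont : ContinuousOn d₂ (Icc 0 L₀) :=
    hreg₂.continuousOn_derivWithin hUD one_le_two
  have hd₁eq : ∀ t ∈ Ioo 0 L₀, d₁ t = deriv U₁ t := fun t ht =>
    derivWithin_of_mem_nhds (Icc_mem_nhds ht.1 ht.2)
  have hd₂eq : ∀ t ∈ Ioo 0 L₀, d₂ t = deriv U₂ t := fun t ht =>
    derivWithin_of_mem_nhds (Icc_mem_nhds ht.1 ht.2)
  have hder₁ : ∀ t ∈ Ioo 0 L₀, HasDerivAt U₁ (d₁ t) t := by
    intro t ht
    have h := ((hreg₁.differentiableOn two_ne_zero) t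
      (Ioo_subset_Icc_self ht)).differentiableAt (Icc_mem_nhds ht.1 ht.2)
    have h2 := h.hasDerivAt
    rwa [← hd₁eq t ht] at h2
  have hder₂ : ∀ t ∈ Ioo 0 L₀, HasDerivAt U₂ (d₂ t) t := by
    intro t ht
    have h := ((hreg₂.differentiableOn two_ne_zero) t
      (Ioo_subset_Icc_self ht)).differentiableAt (Icc_mem_nhds ht.1 ht.2)
    have h2 := h.hasDerivAt
    rwa [← hd₂eq t ht] at h2
  have hC1₁ : ContDiffOn ℝ 1 (deriv U₁) (Ioo 0 L₀) :=
    (hreg₁.mono Ioo_subset_Icc_self).deriv_of_isOpen isOpen_Ioo (by norm_num)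
  have hC1₂ : ContDiffOn ℝ 1 (deriv U₂) (Ioo 0 L₀) :=
    (hreg₂.mono Ioo_subset_Icc_self).deriv_of_isOpen isOpen_Ioo (by norm_num)
  have hdd₁ : ∀ t ∈ Ioo 0 L₀, HasDerivAt d₁ (deriv (deriv U₁) t) t := by
    intro t ht
    have h1 : HasDerivAt (deriv U₁) (deriv (deriv U₁) t) t :=
      ((hC1₁.differentiableOn one_ne_zero t ht).differentiableAt
        (isOpen_Ioo.mem_nhds ht)).hasDerivAt
    apply h1.congr_of_eventuallyEq
    filter_upwards [isOpen_Ioo.mem_nhds ht] with s hs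
    exact hd₁eq s hs
  have hdd₂ : ∀ t ∈ Ioo 0 L₀, HasDerivAt d₂ (deriv (deriv U₂) t) t := by
    intro t ht
    have h1 : HasDerivAt (deriv U₂) (deriv (deriv U₂) t) t :=
      ((hC1₂.differentiableOn one_ne_zero t ht).differentiableAt
        (isOpen_Ioo.mem_nhds ht)).hasDerivAt
    apply h1.congr_of_eventuallyEq
    filter_upwards [isOpen_Ioo.mem_nhds ht] with s hs
    exact hd₂eq s hs
  -- the Wronskian-type function
  set G : ℝ → ℝ := fun t =>
    (hhat₂ * d₂ t) * (A * U₁ t) - (A * d₁ t) * (hhat₂ * U₂ t) with hGdef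
  have hGcont : ContinuousOn G (Icc 0 L₀) :=
    ((continuousOn_const.mul hd₂cont).mul (continuousOn_const.mul hreg₁.continuousOn)).sub
      ((continuousOn_const.mul hd₁cont).mul (continuousOn_const.mul hreg₂.continuousOn))
  set gp : ℝ → ℝ := fun t =>
    (hhat₂ * deriv (deriv U₂) t) * (A * U₁ t) -
      (A * deriv (deriv U₁) t) * (hhat₂ * U₂ t) with hgpdef
  have hGderiv : ∀ t ∈ Ioo 0 L₀, HasDerivAt G (gp t) t := by
    intro t ht
    have e₂ : HasDerivAt (fun s => hhat₂ * d₂ s) (hhat₂ * deriv (deriv U₂) t) t :=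
      (hdd₂ t ht).const_mul hhat₂
    have e₂' : HasDerivAt (fun s => hhat₂ * U₂ s) (hhat₂ * d₂ t) t :=
      (hder₂ t ht).const_mul hhat₂
    have e₁ : HasDerivAt (fun s => A * d₁ s) (A * deriv (deriv U₁) t) t :=
      (hdd₁ t ht).const_mul A
    have e₁' : HasDerivAt (fun s => A * U₁ s) (A * d₁ t) t :=
      (hder₁ t ht).const_mul A
    have h := (e₂.mul e₁').sub (e₁.mul e₂')
    refine HasDerivAt.congr_deriv h ?_
    simp only [hgpdef]
    ring
  have hGpos : ∀ t ∈ Ioo a b, 0 < gp t := by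
    intro t ht
    have ht0 : t ∈ Ioo 0 L₀ := hIooab ht
    have htI : t ∈ Icc 0 L₀ := Ioo_subset_Icc_self ht0
    have hu : 0 < U₁ t := hpos₁ t ht0
    have hv : 0 < U₂ t := hpos₂ t ht0
    have hφt : 0 < φ t := hφposab t ht
    have hVw : A * U₁ t < hhat₂ * U₂ t := by simp only [hφdef] at hφt; linarith
    set P : ℝ := (A * U₁ t) ^ n with hPdef
    set Q : ℝ := (hhat₂ * U₂ t) ^ n with hQdef
    have hP0 : 0 ≤ P := Real.rpow_nonneg (by positivity) n
    have hPQ : P < Q := Real.rpow_lt_rpow (by positivity) hVw hn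
    have hPr : P ≤ r₂ := by
      have h1 : A * U₁ t = c * (hhat₁ * U₁ t) := by rw [hAdef]; ring
      have h2 : P = (r₂ / r₁) * (hhat₁ * U₁ t) ^ n := by
        rw [hPdef, h1, Real.mul_rpow hc0.le (by positivity), hcpow]
      rw [h2]
      calc r₂ / r₁ * (hhat₁ * U₁ t) ^ n ≤ r₂ / r₁ * r₁ :=
            mul_le_mul_of_nonneg_left (hMax₁ t htI) (by positivity)
        _ = r₂ := by field_simp
      done
    have hPn : (hhat₁ * U₁ t) ^ n = r₁ / r₂ * P := by
      have h1 : A * U₁ t = c * (hhat₁ * U₁ t) := by rw [hAdef]; ring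
      have h2 : P = (r₂ / r₁) * (hhat₁ * U₁ t) ^ n := by
        rw [hPdef, h1, Real.mul_rpow hc0.le (by positivity), hcpow]
      rw [h2]; field_simp
    have hDr : D₁ * r₂ ≤ D₂ * r₁ := by
      rw [div_le_div_iff₀ hr₁ hD₁] at hrD; linarith
    have hodd₁ : deriv (deriv U₁) t = -(U₁ t * (r₁ - r₁ / r₂ * P)) / D₁ := by
      have h1 := hode₁ t ht0
      rw [hPn] at h1
      rw [eq_div_iff hD₁.ne']
      linarith
    have hodd₂ : deriv (deriv U₂) t = -(U₂ t * (r₂ - Q)) / D₂ := by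
      have h1 := hode₂ t ht0
      rw [← hQdef] at h1
      rw [eq_div_iff hD₂.ne']
      linarith
    show 0 < (hhat₂ * deriv (deriv U₂) t) * (A * U₁ t) -
      (A * deriv (deriv U₁) t) * (hhat₂ * U₂ t)
    rw [hodd₁, hodd₂]
    have hkey : (r₂ - Q) * (D₁ * r₂) < r₁ * (r₂ - P) * D₂ := by
      linarith [mul_nonneg (sub_nonneg.2 hDr) (sub_nonneg.2 hPr),
        mul_pos (mul_pos hD₁ hr₂) (sub_pos.2 hPQ)]
    have hexp : hhat₂ * (-(U₂ t * (r₂ - Q)) / D₂) * (A * U₁ t) -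
        A * (-(U₁ t * (r₁ - r₁ / r₂ * P)) / D₁) * (hhat₂ * U₂ t) =
        (A * U₁ t) * (hhat₂ * U₂ t) *
          ((r₁ * (r₂ - P) * D₂ - (r₂ - Q) * (D₁ * r₂)) / (D₁ * D₂ * r₂)) := by
      field_simp
      ring
    rw [hexp]
    have hVwpos : 0 < (A * U₁ t) * (hhat₂ * U₂ t) := by positivity
    have : 0 < (r₁ * (r₂ - P) * D₂ - (r₂ - Q) * (D₁ * r₂)) / (D₁ * D₂ * r₂) := by
      apply div_pos (by linarith) (by positivity)
    positivity
  have hGmono : StrictMonoOn G (Icc a b) := by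
    apply strictMonoOn_of_deriv_pos (convex_Icc a b) (hGcont.mono hIccab)
    intro t ht
    rw [interior_Icc] at ht
    rw [(hGderiv t (hIooab ht)).deriv]
    exact hGpos t ht
  -- boundary sign at a
  have hIooabIcc : Ioo a b ⊆ Icc 0 L₀ := fun t ht => Ioo_subset_Icc_self (hIooab ht)
  have hGa : 0 ≤ G a := by
    have hda : HasDerivWithinAt φ (hhat₂ * d₂ a - A * d₁ a) (Ioo a b) a := by
      have h2 : HasDerivWithinAt U₂ (d₂ a) (Icc 0 L₀) a :=
        ((hreg₂.differentiableOn two_ne_zero) a haI).hasDerivWithinAt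
      have h1 : HasDerivWithinAt U₁ (d₁ a) (Icc 0 L₀) a :=
        ((hreg₁.differentiableOn two_ne_zero) a haI).hasDerivWithinAt
      exact ((h2.const_mul hhat₂).sub (h1.const_mul A)).mono hIooabIcc
    have hne : (𝓝[Ioo a b] a).NeBot := by
      rw [← mem_closure_iff_nhdsWithin_neBot, closure_Ioo hab.ne]
      exact ⟨le_refl a, hab.le⟩
    have htend := hasDerivWithinAt_iff_tendsto_slope.mp hda
    rw [Set.diff_singleton_eq_self (fun h => lt_irrefl a h.1)] at htend
    have hq : 0 ≤ hhat₂ * d₂ a - A * d₁ a := by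
      refine ge_of_tendsto htend ?_
      filter_upwards [self_mem_nhdsWithin] with t ht
      rw [slope_def_field, hφa0, sub_zero]
      exact (div_pos (hφposab t ht) (sub_pos.2 ht.1)).le
    have heq : hhat₂ * U₂ a = A * U₁ a := by simp only [hφdef] at hφa0; linarith
    have hs : 0 ≤ A * U₁ a := mul_nonneg hA.le (hU₁0 a haI)
    show 0 ≤ (hhat₂ * d₂ a) * (A * U₁ a) - (A * d₁ a) * (hhat₂ * U₂ a)
    rw [heq]
    linarith [mul_nonneg hs hq]
  -- boundary sign at b
  have hGb : G b ≤ 0 := by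
    have hdb : HasDerivWithinAt φ (hhat₂ * d₂ b - A * d₁ b) (Ioo a b) b := by
      have h2 : HasDerivWithinAt U₂ (d₂ b) (Icc 0 L₀) b :=
        ((hreg₂.differentiableOn two_ne_zero) b hbI).hasDerivWithinAt
      have h1 : HasDerivWithinAt U₁ (d₁ b) (Icc 0 L₀) b :=
        ((hreg₁.differentiableOn two_ne_zero) b hbI).hasDerivWithinAt
      exact ((h2.const_mul hhat₂).sub (h1.const_mul A)).mono hIooabIcc
    have hne : (𝓝[Ioo a b] b).NeBot := by
      rw [← mem_closure_iff_nhdsWithin_neBot, closure_Ioo hab.ne]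
      exact ⟨hab.le, le_refl b⟩
    have htend := hasDerivWithinAt_iff_tendsto_slope.mp hdb
    rw [Set.diff_singleton_eq_self (fun h => lt_irrefl b h.2)] at htend
    have hq : hhat₂ * d₂ b - A * d₁ b ≤ 0 := by
      refine le_of_tendsto htend ?_
      filter_upwards [self_mem_nhdsWithin] with t ht
      rw [slope_def_field, hφb0, sub_zero]
      exact (div_neg_of_pos_of_neg (hφposab t ht) (sub_neg.2 ht.2)).le
    have heq : hhat₂ * U₂ b = A * U₁ b := by simp only [hφdef] at hφb0; linarith
    have hs : 0 ≤ A * U₁ b := mul_nonneg hA.le (hU₁0 b hbI)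
    show (hhat₂ * d₂ b) * (A * U₁ b) - (A * d₁ b) * (hhat₂ * U₂ b) ≤ 0
    rw [heq]
    linarith [mul_nonpos_of_nonneg_of_nonpos hs hq]
  have hfin : G a < G b :=
    hGmono (left_mem_Icc.mpr hab.le) (right_mem_Icc.mpr hab.le) hab
  linarith
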